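/- Let P be a row-stochastic matrix, γ ∈ (0,1), r a vector with 0 ≤ r ≤ 1 entrywise, and V* = (I - γP)^{-1} r. Define Var_P(V*) = P(V* ∘ V*) - (PV*) ∘ (PV*). Then (I - γP)^{-1} Var_P(V*) ≤ (2/(γ²(1-γ)²)) · 1 entrywise. -/

import Mathlib

open Matrix

theorem stmt13 {n : Type*} [Fintype n] [DecidableEq n]
    (γ : ℝ) (hγ : 0 < γ ∧ γ < 1)
    (P : Matrix n n ℝ) (hP : (∀ i j, 0 ≤ P i j) ∧ ∀ i, ∑ j, P i j = 1)
    (hdet : IsUnit ((1 : Matrix n n ℝ) - γ • P).det)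
    (r : n → ℝ) (hr : ∀ i, 0 ≤ r i ∧ r i ≤ 1)
    (Vstar : n → ℝ) (hV : Vstar = ((1 : Matrix n n ℝ) - γ • P)⁻¹ *ᵥ r) :
    ∀ i, (((1 : Matrix n n ℝ) - γ • P)⁻¹ *ᵥ
        (fun j => ∑ s, P j s * (Vstar s) ^ 2 - (∑ s, P j s * Vstar s) ^ 2)) i
      ≤ 2 / (γ ^ 2 * (1 - γ) ^ 2) := by
  obtain ⟨hγ0, hγ1⟩ := hγ
  obtain ⟨hPnn, hPsum⟩ := hP
  have h1γ : (0:ℝ) < 1 - γ := by linarith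
  set M : Matrix n n ℝ := (1 : Matrix n n ℝ) - γ • P with hMdef
  set A : Matrix n n ℝ := M⁻¹ with hAdef
  have hMA : M * A = 1 := Matrix.mul_nonsing_inv M hdet
  have hAM : A * M = 1 := Matrix.nonsing_inv_mul M hdet
  -- componentwise formula for M *ᵥ x
  have hMv : ∀ (x : n → ℝ) (i : n), (M *ᵥ x) i = x i - γ * ∑ j, P i j * x j := by
    intro x i
    simp [hMdef, Matrix.sub_mulVec, Matrix.smul_mulVec, Matrix.one_mulVec,
      Matrix.mulVec, dotProduct, Finset.mul_sum, sub_mul,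
      Finset.sum_sub_distrib, Matrix.one_apply, ite_mul, one_mul, zero_mul,
      mul_assoc]
  -- A preserves nonnegativity
  have key : ∀ y : n → ℝ, (∀ i, 0 ≤ y i) → ∀ i, 0 ≤ (A *ᵥ y) i := by
    intro y hy
    set x := A *ᵥ y with hx
    have hMx : M *ᵥ x = y := by
      rw [hx, Matrix.mulVec_mulVec, hMA, Matrix.one_mulVec]
    intro i0
    by_contra hcon
    push_neg at hcon
    obtain ⟨i, -, hmin⟩ := Finset.exists_min_image Finset.univ x ⟨i0, Finset.mem_univ i0⟩
    have hxi : x i < 0 := lt_of_le_of_lt (hmin i0 (Finset.mem_univ i0)) hcon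
    have h1 : 0 ≤ x i - γ * ∑ j, P i j * x j := by
      have := hy i
      rw [← hMx, hMv] at this
      exact this
    have h2 : x i ≤ ∑ j, P i j * x j := by
      calc x i = ∑ j, P i j * x i := by rw [← Finset.sum_mul, hPsum i, one_mul]
        _ ≤ ∑ j, P i j * x j :=
          Finset.sum_le_sum fun j _ => mul_le_mul_of_nonneg_left
            (hmin j (Finset.mem_univ j)) (hPnn i j)
    nlinarith
  -- monotonicity
  have mono : ∀ y z : n → ℝ, (∀ i, y i ≤ z i) → ∀ i, (A *ᵥ y) i ≤ (A *ᵥ z) i := by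
    intro y z hyz i
    have := key (z - y) (fun i => by simpa using sub_nonneg.mpr (hyz i)) i
    rw [Matrix.mulVec_sub] at this
    simpa using sub_nonneg.mp this
  -- A applied to the constant vector
  have hAone : ∀ c : ℝ, A *ᵥ (fun _ => c) = fun _ => c / (1 - γ) := by
    intro c
    have hMc : M *ᵥ (fun _ => c / (1 - γ)) = fun _ => c := by
      funext i
      rw [hMv]
      rw [← Finset.sum_mul, hPsum i, one_mul]
      field_simp
    calc A *ᵥ (fun _ => c) = A *ᵥ (M *ᵥ fun _ => c / (1 - γ)) := by rw [hMc]
      _ = fun _ => c / (1 - γ) := by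
          rw [Matrix.mulVec_mulVec, hAM, Matrix.one_mulVec]
  -- Bellman equation
  have hBell : ∀ i, ∑ j, P i j * Vstar j = (Vstar i - r i) / γ := by
    intro i
    have hMV : M *ᵥ Vstar = r := by
      rw [hV, Matrix.mulVec_mulVec, hMA, Matrix.one_mulVec]
    have := congrFun hMV i
    rw [hMv] at this
    field_simp
    linarith
  -- nonnegativity and upper bound of Vstar
  have hVnn : ∀ i, 0 ≤ Vstar i := by
    rw [hV]; exact key r fun i => (hr i).1
  have hVub : ∀ i, Vstar i ≤ 1 / (1 - γ) := by
    intro i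
    have := mono r (fun _ => 1) (fun i => (hr i).2) i
    rw [hAone 1, ← hV] at this
    exact this
  set v2 : n → ℝ := fun i => Vstar i ^ 2 with hv2
  -- identity: A *ᵥ (γ • (P *ᵥ v2)) = A *ᵥ v2 - v2
  have hI1 : A *ᵥ (γ • (P *ᵥ v2)) = A *ᵥ v2 - v2 := by
    have : γ • (P *ᵥ v2) = v2 - M *ᵥ v2 := by
      funext i
      simp only [Pi.sub_apply, Pi.smul_apply, smul_eq_mul]
      rw [hMv]
      simp [Matrix.mulVec, dotProduct]
    rw [this, Matrix.mulVec_sub, Matrix.mulVec_mulVec, hAM, Matrix.one_mulVec]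
  intro i
  -- pointwise bound on the variance vector
  have hpw : ∀ j, (∑ s, P j s * Vstar s ^ 2 - (∑ s, P j s * Vstar s) ^ 2)
      ≤ ((P *ᵥ v2) j - (1 / γ ^ 2) * v2 j + (2 / γ ^ 2) * Vstar j) := by
    intro j
    have hPv2 : (P *ᵥ v2) j = ∑ s, P j s * Vstar s ^ 2 := by
      simp [Matrix.mulVec, dotProduct, hv2]
    rw [hPv2, hBell j, div_pow]
    have h1 : 0 ≤ Vstar j := hVnn j
    have h2 : 0 ≤ r j := (hr j).1
    have h3 : r j ≤ 1 := (hr j).2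
    have hγ2 : (0:ℝ) < γ ^ 2 := by positivity
    have h4 : (Vstar j ^ 2 - 2 * Vstar j) / γ ^ 2 ≤ (Vstar j - r j) ^ 2 / γ ^ 2 := by
      gcongr
      nlinarith
    have h5 : 1 / γ ^ 2 * v2 j - 2 / γ ^ 2 * Vstar j
        = (Vstar j ^ 2 - 2 * Vstar j) / γ ^ 2 := by
      show 1 / γ ^ 2 * Vstar j ^ 2 - 2 / γ ^ 2 * Vstar j = _
      ring
    linarith
  -- apply monotonicity
  have step1 : (A *ᵥ (fun j => ∑ s, P j s * Vstar s ^ 2 - (∑ s, P j s * Vstar s) ^ 2)) i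
      ≤ (A *ᵥ ((P *ᵥ v2) - (1 / γ ^ 2) • v2 + (2 / γ ^ 2) • Vstar)) i := by
    apply mono
    intro j
    simpa using hpw j
  have step2 : (A *ᵥ ((P *ᵥ v2) - (1 / γ ^ 2) • v2 + (2 / γ ^ 2) • Vstar)) i
      = (A *ᵥ (P *ᵥ v2)) i - (1 / γ ^ 2) * (A *ᵥ v2) i + (2 / γ ^ 2) * (A *ᵥ Vstar) i := by
    rw [Matrix.mulVec_add, Matrix.mulVec_sub, Matrix.mulVec_smul, Matrix.mulVec_smul]
    simp
  have hAPv2 : (A *ᵥ (P *ᵥ v2)) i = ((A *ᵥ v2) i - v2 i) / γ := by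
    have := congrFun hI1 i
    rw [Matrix.mulVec_smul] at this
    simp only [Pi.smul_apply, Pi.sub_apply, smul_eq_mul] at this
    rw [eq_div_iff (ne_of_gt hγ0)]
    linarith
  have hAv2nn : 0 ≤ (A *ᵥ v2) i := key v2 (fun j => sq_nonneg _) i
  have hv2nn : 0 ≤ v2 i := sq_nonneg _
  have hAVub : (A *ᵥ Vstar) i ≤ 1 / (1 - γ) ^ 2 := by
    have := mono Vstar (fun _ => 1 / (1 - γ)) hVub i
    rw [hAone] at this
    calc (A *ᵥ Vstar) i ≤ 1 / (1 - γ) / (1 - γ) := this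
      _ = 1 / (1 - γ) ^ 2 := by rw [div_div, ← pow_two]
  calc (A *ᵥ (fun j => ∑ s, P j s * Vstar s ^ 2 - (∑ s, P j s * Vstar s) ^ 2)) i
      ≤ (A *ᵥ (P *ᵥ v2)) i - (1 / γ ^ 2) * (A *ᵥ v2) i + (2 / γ ^ 2) * (A *ᵥ Vstar) i := by
        rw [← step2]; exact step1
    _ = ((A *ᵥ v2) i - v2 i) / γ - (1 / γ ^ 2) * (A *ᵥ v2) i + (2 / γ ^ 2) * (A *ᵥ Vstar) i := by
        rw [hAPv2]
    _ ≤ (2 / γ ^ 2) * (A *ᵥ Vstar) i := by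
        have hγ2 : (0:ℝ) < γ ^ 2 := by positivity
        have e0 : 1 / γ ^ 2 * (A *ᵥ v2) i * γ ^ 2 = (A *ᵥ v2) i := by
          field_simp
        have e1 : ((A *ᵥ v2) i - v2 i) / γ * γ ^ 2 = γ * ((A *ᵥ v2) i - v2 i) := by
          field_simp
        have key3 : ((A *ᵥ v2) i - v2 i) / γ ≤ 1 / γ ^ 2 * (A *ᵥ v2) i := by
          apply (mul_le_mul_iff_of_pos_right hγ2).mp
          rw [e0, e1]
          nlinarith
        linarith
    _ ≤ (2 / γ ^ 2) * (1 / (1 - γ) ^ 2) := by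
        apply mul_le_mul_of_nonneg_left hAVub
        positivity
    _ = 2 / (γ ^ 2 * (1 - γ) ^ 2) := by
        field_simp
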